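/- Let d ≥ 3 be an integer and s = (s_0,…,s_d) ∈ ℝ^{d+1} with s_j ≠ 0 for some j ≤ d−1. Define on ℝ (equivalently, with real coefficients): p(t) = Σ_{j=0}^{d−1} C(d−1,j) s_{j+1} t^{j}, q(t) = Σ_{j=0}^{d−1} C(d−1,j) s_j t^{j}, u(t) = Σ_{j=0}^{d−1} C(d−1,j) s_{j+1} p(t)^{j} q(t)^{d−1−j}, v(t) = Σ_{j=0}^{d−1} C(d−1,j) s_j p(t)^{j} q(t)^{d−1−j}, and f_s(x₀,x₁) = Σ_{j=0}^{d} C(d,j) s_j x₀^{d−j} x₁^{j}. Assume there exists w ∈ ℂ with w·v(w) ≠ u(w) (where u, v are extended to ℂ using the same real coefficients). Then sSup{ |f_s(x₀,x₁)| : (x₀,x₁) ∈ ℝ², x₀² + x₁² = 1 } = sSup( {|s_d|} ∪ { |q(t)| · (1 + t²)^{−(d−2)/2} : t ∈ ℝ, t·q(t) = p(t) } ). -/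

import Mathlib

lemma sumPascal (e : ℕ) (s : Fin (e+2) → ℝ) (t : ℝ) :
    ∑ j : Fin (e+2), ((e+1).choose (j:ℕ) : ℝ) * s j * t ^ (j:ℕ)
    = (∑ j : Fin (e+1), (e.choose (j:ℕ) : ℝ) * s j.castSucc * t^(j:ℕ))
      + t * ∑ j : Fin (e+1), (e.choose (j:ℕ) : ℝ) * s j.succ * t^(j:ℕ) := by
  rw [Fin.sum_univ_succ (f := fun j : Fin (e+2) => ((e+1).choose (j:ℕ) : ℝ) * s j * t ^ (j:ℕ))]
  rw [Fin.sum_univ_succ (f := fun j : Fin (e+1) => (e.choose (j:ℕ) : ℝ) * s j.castSucc * t ^ (j:ℕ))]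
  have h1 : ∀ k : Fin (e+1), ((e+1).choose ((k.succ : Fin (e+2)):ℕ) : ℝ) * s k.succ * t ^ ((k.succ : Fin (e+2)):ℕ)
      = (e.choose (k:ℕ) : ℝ) * s k.succ * t^((k:ℕ)+1) + (e.choose ((k:ℕ)+1) : ℝ) * s k.succ * t^((k:ℕ)+1) := by
    intro k
    simp [Fin.val_succ, Nat.choose_succ_succ]
    push_cast
    ring
  rw [Finset.sum_congr rfl (fun k _ => h1 k), Finset.sum_add_distrib]
  have h2 : (∑ k : Fin (e+1), (e.choose ((k:ℕ)+1) : ℝ) * s k.succ * t^((k:ℕ)+1))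
      = ∑ j : Fin e, (e.choose ((j.succ : Fin (e+1)):ℕ) : ℝ) * s (j.succ : Fin (e+1)).castSucc * t ^ (((j.succ: Fin (e+1))):ℕ) := by
    rw [Fin.sum_univ_castSucc (f := fun k : Fin (e+1) => (e.choose ((k:ℕ)+1) : ℝ) * s k.succ * t^((k:ℕ)+1))]
    simp [Nat.choose_succ_self]
  rw [h2]
  have h3 : ∀ k : Fin (e+1), (e.choose (k:ℕ) : ℝ) * s k.succ * t^((k:ℕ)+1)
      = t * ((e.choose (k:ℕ) : ℝ) * s k.succ * t^(k:ℕ)) := by intro k; ring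
  rw [Finset.sum_congr rfl (fun k _ => h3 k), ← Finset.mul_sum]
  simp
  ring

lemma valueLem (e : ℕ) (s : Fin (e+2) → ℝ) (t x₀ x₁ : ℝ)
    (hx0 : x₀ ≠ 0) (hcirc : x₀^2 + x₁^2 = 1) (hx1 : x₁ = t * x₀)
    (hcrit : t * (∑ j : Fin (e+1), (e.choose (j:ℕ) : ℝ) * s j.castSucc * t^(j:ℕ))
           = ∑ j : Fin (e+1), (e.choose (j:ℕ) : ℝ) * s j.succ * t^(j:ℕ)) :
    |∑ j : Fin (e+2), ((e+1).choose (j:ℕ) : ℝ) * s j * x₀ ^ (e+1 - (j:ℕ)) * x₁ ^ (j:ℕ)|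
    = |∑ j : Fin (e+1), (e.choose (j:ℕ) : ℝ) * s j.castSucc * t^(j:ℕ)|
      * (1+t^2) ^ (-((((e+1:ℕ)):ℝ)-2)/2) := by
  set Q := ∑ j : Fin (e+1), (e.choose (j:ℕ) : ℝ) * s j.castSucc * t^(j:ℕ) with hQ
  have hA : (0:ℝ) < 1 + t^2 := by positivity
  have hx2 : x₀^2 = (1+t^2)⁻¹ := by
    have h : x₀^2 * (1+t^2) = 1 := by rw [hx1] at hcirc; nlinarith [hcirc]
    exact eq_inv_of_mul_eq_one_left h
  have hsum : ∑ j : Fin (e+2), ((e+1).choose (j:ℕ) : ℝ) * s j * x₀ ^ (e+1 - (j:ℕ)) * x₁ ^ (j:ℕ)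
      = x₀^(e+1) * (Q * (1+t^2)) := by
    have hterm : ∀ j : Fin (e+2), ((e+1).choose (j:ℕ) : ℝ) * s j * x₀ ^ (e+1 - (j:ℕ)) * x₁ ^ (j:ℕ)
        = x₀^(e+1) * (((e+1).choose (j:ℕ) : ℝ) * s j * t ^ (j:ℕ)) := by
      intro j
      have hj : (j:ℕ) ≤ e+1 := Nat.lt_succ_iff.mp j.isLt
      have hx : x₀ ^ (e+1-(j:ℕ)) * x₀ ^ (j:ℕ) = x₀ ^ (e+1) := by
        rw [← pow_add, Nat.sub_add_cancel hj]
      rw [hx1, mul_pow]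
      linear_combination (((e+1).choose (j:ℕ) : ℝ) * s j * t^(j:ℕ)) * hx
    rw [Finset.sum_congr rfl (fun j _ => hterm j), ← Finset.mul_sum, sumPascal e s t,
      ← hQ, ← hcrit]
    ring
  have habs : |x₀| ^ (e+1) = (1+t^2) ^ (-(((e+1:ℕ)):ℝ)/2) := by
    have h1 : |x₀| = ((1+t^2)⁻¹) ^ ((1:ℝ)/2) := by
      rw [← Real.sqrt_eq_rpow, ← hx2, Real.sqrt_sq_eq_abs]
    rw [h1, ← Real.rpow_natCast (((1+t^2)⁻¹) ^ ((1:ℝ)/2)) (e+1), ← Real.rpow_mul (by positivity),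
      Real.inv_rpow hA.le, ← Real.rpow_neg hA.le]
    norm_num
    ring_nf
  rw [hsum, abs_mul, abs_mul, abs_pow, habs, abs_of_pos hA]
  have key : (1+t^2) ^ (-(((e+1:ℕ)):ℝ)/2) * (1+t^2) = (1+t^2) ^ (-((((e+1:ℕ)):ℝ)-2)/2) := by
    rw [← Real.rpow_add_one (ne_of_gt hA)]
    congr 1; push_cast; ring
  rw [mul_comm (|Q|) (1+t^2), ← mul_assoc, key]
  ring

lemma derivLem (e : ℕ) (s : Fin (e+2) → ℝ) (θ : ℝ) :
    HasDerivAt (fun θ => ∑ j : Fin (e+2), ((e+1).choose (j:ℕ) : ℝ) * s j *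
        Real.cos θ ^ (e+1 - (j:ℕ)) * Real.sin θ ^ (j:ℕ))
      (((e+1:ℕ):ℝ) * (Real.cos θ *
          (∑ j : Fin (e+1), (e.choose (j:ℕ) : ℝ) * s j.succ * Real.cos θ ^ (e-(j:ℕ)) * Real.sin θ ^ (j:ℕ))
        - Real.sin θ *
          (∑ j : Fin (e+1), (e.choose (j:ℕ) : ℝ) * s j.castSucc * Real.cos θ ^ (e-(j:ℕ)) * Real.sin θ ^ (j:ℕ)))) θ := by
  have hterm : ∀ j : Fin (e+2), HasDerivAt
      (fun θ => ((e+1).choose (j:ℕ) : ℝ) * s j * Real.cos θ ^ (e+1 - (j:ℕ)) * Real.sin θ ^ (j:ℕ))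
      ((((e+1).choose (j:ℕ) : ℝ) * s j * (((((e+1-(j:ℕ) : ℕ))) : ℝ) * Real.cos θ ^ (e+1-(j:ℕ)-1) * -Real.sin θ)) * Real.sin θ ^ (j:ℕ)
        + (((e+1).choose (j:ℕ) : ℝ) * s j * Real.cos θ ^ (e+1-(j:ℕ))) * (((j:ℕ):ℝ) * Real.sin θ ^ ((j:ℕ)-1) * Real.cos θ)) θ := by
    intro j
    exact (((Real.hasDerivAt_cos θ).pow _).const_mul (((e+1).choose (j:ℕ) : ℝ) * s j)).mul
      ((Real.hasDerivAt_sin θ).pow _)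
  have h1 := HasDerivAt.fun_sum (u := Finset.univ) (fun j (_ : j ∈ Finset.univ) => hterm j)
  convert h1 using 1
  · rfl
  · rfl
  -- now prove the sum identity
  rw [Finset.sum_add_distrib]
  have hA : (∑ j : Fin (e+2), (((e+1).choose (j:ℕ) : ℝ) * s j * (((((e+1-(j:ℕ) : ℕ))) : ℝ) * Real.cos θ ^ (e+1-(j:ℕ)-1) * -Real.sin θ)) * Real.sin θ ^ (j:ℕ))
      = ∑ k : Fin (e+1), -(((e+1:ℕ):ℝ) * Real.sin θ) * ((e.choose (k:ℕ) : ℝ) * s k.castSucc * Real.cos θ ^ (e-(k:ℕ)) * Real.sin θ ^ (k:ℕ)) := by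
    rw [Fin.sum_univ_castSucc (f := fun j : Fin (e+2) =>
      (((e+1).choose (j:ℕ) : ℝ) * s j * (((((e+1-(j:ℕ) : ℕ))) : ℝ) * Real.cos θ ^ (e+1-(j:ℕ)-1) * -Real.sin θ)) * Real.sin θ ^ (j:ℕ))]
    simp only [Fin.val_last, Nat.sub_self, Nat.cast_zero, zero_mul, mul_zero, add_zero,
      Fin.coe_castSucc]
    apply Finset.sum_congr rfl
    intro k _
    have hk : (k:ℕ) ≤ e := Nat.lt_succ_iff.mp k.isLt
    have hnat : (e.choose (k:ℕ)) * (e+1) = ((e+1).choose (k:ℕ)) * (e+1-(k:ℕ)) :=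
      Nat.choose_mul_succ_eq e (k:ℕ)
    have hcast : (e.choose (k:ℕ) : ℝ) * ((e+1:ℕ):ℝ) = ((e+1).choose (k:ℕ) : ℝ) * (((e+1-(k:ℕ)):ℕ):ℝ) := by
      exact_mod_cast congrArg (Nat.cast : ℕ → ℝ) hnat
    have hexp : e+1-(k:ℕ)-1 = e-(k:ℕ) := by omega
    rw [hexp]
    linear_combination (Real.sin θ * Real.sin θ ^ (k:ℕ) * Real.cos θ ^ (e-(k:ℕ)) * s k.castSucc) * hcast
  have hB : (∑ j : Fin (e+2), (((e+1).choose (j:ℕ) : ℝ) * s j * Real.cos θ ^ (e+1-(j:ℕ))) * (((j:ℕ):ℝ) * Real.sin θ ^ ((j:ℕ)-1) * Real.cos θ))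
      = ∑ k : Fin (e+1), (((e+1:ℕ):ℝ) * Real.cos θ) * ((e.choose (k:ℕ) : ℝ) * s k.succ * Real.cos θ ^ (e-(k:ℕ)) * Real.sin θ ^ (k:ℕ)) := by
    rw [Fin.sum_univ_succ (f := fun j : Fin (e+2) =>
      (((e+1).choose (j:ℕ) : ℝ) * s j * Real.cos θ ^ (e+1-(j:ℕ))) * (((j:ℕ):ℝ) * Real.sin θ ^ ((j:ℕ)-1) * Real.cos θ))]
    simp only [Fin.val_zero, Nat.cast_zero, zero_mul, mul_zero, zero_add, Fin.val_succ]
    apply Finset.sum_congr rfl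
    intro k _
    have hk : (k:ℕ) ≤ e := Nat.lt_succ_iff.mp k.isLt
    have hnat : (e+1) * (e.choose (k:ℕ)) = ((e+1).choose ((k:ℕ)+1)) * ((k:ℕ)+1) :=
      Nat.add_one_mul_choose_eq e (k:ℕ)
    have hcast : ((e+1:ℕ):ℝ) * (e.choose (k:ℕ) : ℝ) = ((e+1).choose ((k:ℕ)+1) : ℝ) * (((k:ℕ):ℝ)+1) := by
      exact_mod_cast congrArg (Nat.cast : ℕ → ℝ) hnat
    have hexp : e+1-((k:ℕ)+1) = e-(k:ℕ) := by omega
    have hexp2 : (k:ℕ)+1-1 = (k:ℕ) := by omega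
    rw [hexp, hexp2]
    push_cast at hcast ⊢
    linear_combination (-(Real.cos θ * Real.cos θ ^ (e-(k:ℕ)) * Real.sin θ ^ (k:ℕ) * s k.succ)) * hcast
  rw [hA, hB, ← Finset.mul_sum, ← Finset.mul_sum]
  ring

lemma lastLem (e : ℕ) (s : Fin (e+2) → ℝ) (x₁ : ℝ) :
    ∑ j : Fin (e+2), ((e+1).choose (j:ℕ) : ℝ) * s j * (0:ℝ) ^ (e+1-(j:ℕ)) * x₁ ^ (j:ℕ)
    = s (Fin.last (e+1)) * x₁^(e+1) := by
  rw [Fin.sum_univ_castSucc (f := fun j : Fin (e+2) =>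
    ((e+1).choose (j:ℕ) : ℝ) * s j * (0:ℝ) ^ (e+1-(j:ℕ)) * x₁ ^ (j:ℕ))]
  rw [Finset.sum_eq_zero]
  · simp [Fin.val_last]
  · intro k _
    have hk : (k.castSucc : ℕ) = (k:ℕ) := rfl
    rw [hk, zero_pow (by omega : e+1-(k:ℕ) ≠ 0)]
    ring

open Real

/-- Real case: outside the exceptional family, the real spectral norm of
a real symmetric d-qubit equals the max of |s_d| and |q(t)|(1+t²)^{−(d−2)/2} over the
real solutions t of t·q(t) = p(t). -/
theorem stmt_17 (d : ℕ) (hd : 3 ≤ d) (s : Fin (d + 1) → ℝ)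
    (hs : ∃ j : Fin (d + 1), (j : ℕ) ≤ d - 1 ∧ s j ≠ 0)
    (p q u v : ℝ → ℝ)
    (hp : ∀ t, p t = ∑ j : Fin d, ((d - 1).choose j : ℝ) * s j.succ * t ^ (j : ℕ))
    (hq : ∀ t, q t = ∑ j : Fin d, ((d - 1).choose j : ℝ) * s j.castSucc * t ^ (j : ℕ))
    (hu : ∀ t, u t = ∑ j : Fin d, ((d - 1).choose j : ℝ) * s j.succ *
        p t ^ (j : ℕ) * q t ^ (d - 1 - (j : ℕ)))
    (hv : ∀ t, v t = ∑ j : Fin d, ((d - 1).choose j : ℝ) * s j.castSucc *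
        p t ^ (j : ℕ) * q t ^ (d - 1 - (j : ℕ)))
    (pC qC uC vC : ℂ → ℂ)
    (hpC : ∀ z, pC z = ∑ j : Fin d, ((d - 1).choose j : ℂ) * (s j.succ : ℂ) * z ^ (j : ℕ))
    (hqC : ∀ z, qC z = ∑ j : Fin d, ((d - 1).choose j : ℂ) * (s j.castSucc : ℂ) * z ^ (j : ℕ))
    (huC : ∀ z, uC z = ∑ j : Fin d, ((d - 1).choose j : ℂ) * (s j.succ : ℂ) *
        pC z ^ (j : ℕ) * qC z ^ (d - 1 - (j : ℕ)))
    (hvC : ∀ z, vC z = ∑ j : Fin d, ((d - 1).choose j : ℂ) * (s j.castSucc : ℂ) *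
        pC z ^ (j : ℕ) * qC z ^ (d - 1 - (j : ℕ)))
    (hexc : ∃ w : ℂ, w * vC w ≠ uC w) :
    sSup {r : ℝ | ∃ x₀ x₁ : ℝ, x₀ ^ 2 + x₁ ^ 2 = 1 ∧
        r = |∑ j : Fin (d + 1), (d.choose j : ℝ) * s j * x₀ ^ (d - (j : ℕ)) * x₁ ^ (j : ℕ)|} =
    sSup ({|s (Fin.last d)|} ∪
      {r : ℝ | ∃ t : ℝ, t * q t = p t ∧
        r = |q t| * (1 + t ^ 2) ^ (-(((d : ℝ) - 2) / 2))}) := by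
  clear hs hu hv hpC hqC huC hvC hexc
  obtain ⟨e, rfl⟩ : ∃ e, d = e + 1 := ⟨d - 1, by omega⟩
  simp only [Nat.add_sub_cancel] at hp hq
  set A : Set ℝ := {r : ℝ | ∃ x₀ x₁ : ℝ, x₀ ^ 2 + x₁ ^ 2 = 1 ∧
      r = |∑ j : Fin (e+1+1), ((e+1).choose j : ℝ) * s j * x₀ ^ (e+1 - (j : ℕ)) * x₁ ^ (j : ℕ)|}
    with hA
  set B : Set ℝ := ({|s (Fin.last (e+1))|} ∪
      {r : ℝ | ∃ t : ℝ, t * q t = p t ∧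
        r = |q t| * (1 + t ^ 2) ^ (-((((e+1:ℕ) : ℝ) - 2) / 2))}) with hB
  set F : ℝ → ℝ := fun θ => ∑ j : Fin (e+2), ((e+1).choose (j:ℕ) : ℝ) * s j *
      Real.cos θ ^ (e+1 - (j:ℕ)) * Real.sin θ ^ (j:ℕ) with hF
  have hFcont : Continuous F := by
    apply continuous_finset_sum
    intro j _
    fun_prop
  -- A as image
  have hmemA : ∀ θ : ℝ, |F θ| ∈ A := by
    intro θ
    exact ⟨Real.cos θ, Real.sin θ, by rw [Real.cos_sq_add_sin_sq], rfl⟩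
  have himg : A = (fun θ => |F θ|) '' Set.Icc (-π) π := by
    ext r
    constructor
    · rintro ⟨x₀, x₁, hcirc, rfl⟩
      set z : ℂ := ⟨x₀, x₁⟩ with hz
      have habs : ‖z‖ = 1 := by
        rw [Complex.norm_def, Complex.normSq_mk]
        rw [show x₀ * x₀ + x₁ * x₁ = 1 by nlinarith [hcirc]]
        exact Real.sqrt_one
      have hz0 : z ≠ 0 := by
        intro h
        rw [h] at habs
        simp at habs
      refine ⟨Complex.arg z, ⟨(Complex.neg_pi_lt_arg z).le, Complex.arg_le_pi z⟩, ?_⟩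
      have hc : Real.cos z.arg = x₀ := by rw [Complex.cos_arg hz0, habs]; simp [hz]
      have hsn : Real.sin z.arg = x₁ := by rw [Complex.sin_arg, habs]; simp [hz]
      rw [hF]
      simp only [hc, hsn]
    · rintro ⟨θ, _, rfl⟩
      exact hmemA θ
  -- max attained
  obtain ⟨θm, hθmIcc, hmax⟩ : ∃ θm ∈ Set.Icc (-π) π, ∀ θ ∈ Set.Icc (-π) π, |F θ| ≤ |F θm| := by
    obtain ⟨θm, hm, hmax⟩ := isCompact_Icc.exists_isMaxOn (Set.nonempty_Icc.mpr (by linarith [Real.pi_pos]))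
      (hFcont.abs.continuousOn (s := Set.Icc (-π) π))
    exact ⟨θm, hm, fun θ hθ => hmax hθ⟩
  have hub : ∀ r ∈ A, r ≤ |F θm| := by
    rintro r hr
    rw [himg] at hr
    obtain ⟨θ, hθ, rfl⟩ := hr
    exact hmax θ hθ
  have hglobal : ∀ θ : ℝ, |F θ| ≤ |F θm| := fun θ => hub _ (hmemA θ)
  have hgreat : IsGreatest A (|F θm|) := ⟨hmemA θm, hub⟩
  -- derivative zero at θm
  have hlocmax : IsLocalMax (fun θ => |F θ|) θm :=
    Filter.Eventually.of_forall hglobal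
  have hderiv0 : deriv F θm = 0 := by
    by_cases hsign : 0 ≤ F θm
    · have : IsLocalMax F θm := by
        apply Filter.Eventually.of_forall
        intro θ
        calc F θ ≤ |F θ| := le_abs_self _
          _ ≤ |F θm| := hglobal θ
          _ = F θm := abs_of_nonneg hsign
      exact this.deriv_eq_zero
    · push_neg at hsign
      have : IsLocalMin F θm := by
        apply Filter.Eventually.of_forall
        intro θ
        have h1 : -|F θ| ≤ F θ := neg_abs_le _
        have h2 : F θm = -|F θm| := by rw [abs_of_neg hsign]; ring
        calc F θm = -|F θm| := h2
          _ ≤ -|F θ| := neg_le_neg (hglobal θ)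
          _ ≤ F θ := h1
      exact this.deriv_eq_zero
  have hD := derivLem e s θm
  have hcrit0 : Real.cos θm *
        (∑ j : Fin (e+1), (e.choose (j:ℕ) : ℝ) * s j.succ * Real.cos θm ^ (e-(j:ℕ)) * Real.sin θm ^ (j:ℕ))
      = Real.sin θm *
        (∑ j : Fin (e+1), (e.choose (j:ℕ) : ℝ) * s j.castSucc * Real.cos θm ^ (e-(j:ℕ)) * Real.sin θm ^ (j:ℕ)) := by
    have h1 : (((e+1:ℕ)):ℝ) * (Real.cos θm * _ - Real.sin θm * _) = 0 := hD.deriv ▸ hderiv0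
    have h2 : (((e+1:ℕ)):ℝ) ≠ 0 := by positivity
    have := mul_eq_zero.mp h1
    rcases this with h | h
    · exact absurd h h2
    · linarith [sub_eq_zero.mp h]
  -- |F θm| ∈ B
  have hmemB : |F θm| ∈ B := by
    by_cases hcos : Real.cos θm = 0
    · refine Or.inl ?_
      have hsin2 : Real.sin θm ^ 2 = 1 := by
        have := Real.sin_sq_add_cos_sq θm
        nlinarith
      have hFv : F θm = s (Fin.last (e+1)) * Real.sin θm ^ (e+1) := by
        rw [hF]
        simp only [hcos]
        exact lastLem e s (Real.sin θm)
      have habs1 : |Real.sin θm| = 1 := by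
        have h2 : Real.sin θm = 1 ∨ Real.sin θm = -1 := sq_eq_one_iff.mp hsin2
        rcases h2 with h | h <;> rw [h] <;> norm_num
      show |F θm| = |s (Fin.last (e+1))|
      rw [hFv, abs_mul, abs_pow, habs1, one_pow, mul_one]
    · refine Or.inr ?_
      set t : ℝ := Real.sin θm / Real.cos θm with ht
      have hsin : Real.sin θm = t * Real.cos θm := by
        rw [ht]; field_simp
      have hcosE : ∀ S : Fin (e+1) → ℝ,
          (∑ j : Fin (e+1), S j * Real.cos θm ^ (e-(j:ℕ)) * Real.sin θm ^ (j:ℕ))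
          = Real.cos θm ^ e * ∑ j : Fin (e+1), S j * t ^ (j:ℕ) := by
        intro S
        rw [Finset.mul_sum]
        apply Finset.sum_congr rfl
        intro k _
        have hk : (k:ℕ) ≤ e := Nat.lt_succ_iff.mp k.isLt
        have hpow : Real.cos θm ^ (e-(k:ℕ)) * Real.cos θm ^ (k:ℕ) = Real.cos θm ^ e := by
          rw [← pow_add, Nat.sub_add_cancel hk]
        rw [ht, div_pow, ← hpow]
        field_simp
      have hP : (∑ j : Fin (e+1), (e.choose (j:ℕ) : ℝ) * s j.succ * Real.cos θm ^ (e-(j:ℕ)) * Real.sin θm ^ (j:ℕ))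
          = Real.cos θm ^ e * p t := by
        rw [hp t]; exact hcosE _
      have hQ : (∑ j : Fin (e+1), (e.choose (j:ℕ) : ℝ) * s j.castSucc * Real.cos θm ^ (e-(j:ℕ)) * Real.sin θm ^ (j:ℕ))
          = Real.cos θm ^ e * q t := by
        rw [hq t]; exact hcosE _
      rw [hP, hQ] at hcrit0
      have hcrit' : t * q t = p t := by
        have hcn : Real.cos θm ^ (e+1) ≠ 0 := pow_ne_zero _ hcos
        apply mul_left_cancel₀ hcn
        linear_combination (-1:ℝ) * hcrit0 - (Real.cos θm ^ e * q t) * hsin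
      have hcritsum : t * (∑ j : Fin (e+1), (e.choose (j:ℕ) : ℝ) * s j.castSucc * t^(j:ℕ))
          = ∑ j : Fin (e+1), (e.choose (j:ℕ) : ℝ) * s j.succ * t^(j:ℕ) := by
        rw [← hp, ← hq]; exact hcrit'
      have hval := valueLem e s t (Real.cos θm) (Real.sin θm) hcos
        (by rw [Real.cos_sq_add_sin_sq]) hsin hcritsum
      refine ⟨t, hcrit', ?_⟩
      calc |F θm| = |∑ j : Fin (e+1), (e.choose (j:ℕ) : ℝ) * s j.castSucc * t^(j:ℕ)|
            * (1+t^2) ^ (-((((e+1:ℕ)):ℝ)-2)/2) := hval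
        _ = |q t| * (1 + t ^ 2) ^ (-((((e+1:ℕ) : ℝ) - 2) / 2)) := by
            rw [← hq, neg_div]
  -- B ⊆ A
  have hBsubA : B ⊆ A := by
    rintro r (hr | hr)
    · rw [Set.mem_singleton_iff] at hr
      subst hr
      refine ⟨0, 1, by norm_num, ?_⟩
      rw [lastLem e s 1]
      simp
    · obtain ⟨t, hcrit', rfl⟩ := hr
      have hpos : (0:ℝ) < 1 + t^2 := by positivity
      have hs0 : (0:ℝ) < Real.sqrt (1+t^2) := Real.sqrt_pos.mpr hpos
      have hsq : (Real.sqrt (1+t^2))^2 = 1+t^2 := Real.sq_sqrt hpos.le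
      refine ⟨1/Real.sqrt (1+t^2), t * (1/Real.sqrt (1+t^2)), ?_, ?_⟩
      · field_simp
        exact hsq.symm
      · have hx0 : (1/Real.sqrt (1+t^2)) ≠ 0 := by positivity
        have hcritsum : t * (∑ j : Fin (e+1), (e.choose (j:ℕ) : ℝ) * s j.castSucc * t^(j:ℕ))
            = ∑ j : Fin (e+1), (e.choose (j:ℕ) : ℝ) * s j.succ * t^(j:ℕ) := by
          rw [← hp, ← hq]; exact hcrit'
        have hcirc : (1/Real.sqrt (1+t^2))^2 + (t * (1/Real.sqrt (1+t^2)))^2 = 1 := by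
          field_simp
          exact hsq.symm
        have hval := valueLem e s t (1/Real.sqrt (1+t^2)) (t * (1/Real.sqrt (1+t^2))) hx0
          hcirc rfl hcritsum
        rw [hval, ← hq, neg_div]
  -- conclusion
  have hAbdd : BddAbove A := ⟨|F θm|, hub⟩
  have hBbdd : BddAbove B := hAbdd.mono hBsubA
  have hBne : B.Nonempty := ⟨|s (Fin.last (e+1))|, Or.inl rfl⟩
  have hsupA : sSup A = |F θm| := hgreat.csSup_eq
  apply le_antisymm
  · rw [hsupA]
    exact le_csSup hBbdd hmemB
  · exact csSup_le_csSup hAbdd hBne hBsubA
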